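/- Let R be the ring of integer-valued polynomials. For d ≥ 1 and the arithmetic complex C_•(x, 1^d) over R with C_k = R^{binom(d,k)} indexed by weak compositions and differential ∂_k(f_{(λ_t,…,λ_1)}) = ∑_{j=1}^{t} ∑_{i=1}^{λ_j} (-1)^{t-j} binom(ω(I_{λ_j}), ω(I_{λ_j} \ {i})) f_{(λ_t,…,λ_{j+1}, i-1, λ_j - i, λ_{j-1},…,λ_1)} (where vertex weights are w_0 = x, w_1 = ⋯ = w_d = 1), the composition ∂_{k-1} ∘ ∂_k = 0; that is, C_•(x, 1^d) is a chain complex. -/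

import Mathlib

open Finset

/-- Generalized binomial coefficient `binom(a, b)` for integers `a, b`:
`a(a-1)⋯(a-b+1)/b!` when `b ≥ 0`, and `0` when `b < 0`. -/
noncomputable def zbinom (a b : ℤ) : ℤ := if 0 ≤ b then Ring.choose a b.toNat else 0

/-- `S(s) = ∑_{m=1}^{s} (μ_m + λ_m)`. -/
def Sfun (lam mu : ℕ → ℕ) (s : ℕ) : ℤ := ∑ m ∈ Finset.Icc 1 s, ((mu m : ℤ) + (lam m : ℤ))

/-- `A_k(λ,μ) = ∏_{s=0}^{k-2} binom(S(s)+μ_{s+1}+2s, S(s)+λ_{s+1}+2s)`. -/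
noncomputable def Afun (lam mu : ℕ → ℕ) (k : ℕ) : ℤ :=
  ∏ s ∈ Finset.range (k - 1),
    zbinom (Sfun lam mu s + (mu (s+1) : ℤ) + 2 * s) (Sfun lam mu s + (lam (s+1) : ℤ) + 2 * s)

/-- `B_k(λ,μ) = ∏_{s=k+1}^{t-1} binom(S(s-1)+μ_s+μ_{s+1}+2s-1, S(s)+2s-1)`. -/
noncomputable def Bfun (t : ℕ) (lam mu : ℕ → ℕ) (k : ℕ) : ℤ :=
  ∏ s ∈ Finset.Icc (k + 1) (t - 1),
    zbinom (Sfun lam mu (s - 1) + (mu s : ℤ) + (mu (s+1) : ℤ) + 2 * s - 1)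
      (Sfun lam mu s + 2 * s - 1)

/-- `g_k(λ,μ;z) = binom(S(k-1)+μ_k+2(k-1), S(k-1)+λ_k-z+2(k-1))`. -/
noncomputable def gfun (lam mu : ℕ → ℕ) (k : ℕ) (z : ℤ) : ℤ :=
  zbinom (Sfun lam mu (k - 1) + (mu k : ℤ) + 2 * ((k : ℤ) - 1))
    (Sfun lam mu (k - 1) + (lam k : ℤ) - z + 2 * ((k : ℤ) - 1))

/-- `h_k(λ,μ;z) = binom(S(k)+μ_{k+1}-z+2(k-1)+2, S(k)+2(k-1)+1)`. -/
noncomputable def hfun (lam mu : ℕ → ℕ) (k : ℕ) (z : ℤ) : ℤ :=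
  zbinom (Sfun lam mu k + (mu (k+1) : ℤ) - z + 2 * ((k : ℤ) - 1) + 2)
    (Sfun lam mu k + 2 * ((k : ℤ) - 1) + 1)

/-- Reindexing of a tuple `f : Fin n → ℕ` (with `f ⟨m-1⟩` giving the part with subscript
`m`) as a function `ℕ → ℕ` supported on `{1, …, n}`. -/
def toFun (n : ℕ) (f : Fin n → ℕ) : ℕ → ℕ :=
  fun m => if h : 1 ≤ m ∧ m ≤ n then f ⟨m - 1, by omega⟩ else 0

/-- The weak composition `(λ_t, …, λ_{j+1}, i-1, λ_j - i, λ_{j-1}, …, λ_1)` (with `t+1`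
parts, subscripts `1, …, t+1`) obtained from `λ = (λ_t, …, λ_1)` by splitting the `j`-th
interval at its `i`-th edge. -/
def split (lam : ℕ → ℕ) (j i : ℕ) : ℕ → ℕ := fun m =>
  if m < j then lam m else if m = j then lam j - i else if m = j + 1 then i - 1 else lam (m - 1)

/-- The coefficient of `f_ν` in `∂(f_λ)`, for the arithmetic complex `C_•(w_0, 1^d)` with
`w_0 = x`: the differential is
`∂(f_{(λ_t,…,λ_1)}) = ∑_{j=1}^{t} ∑_{i=1}^{λ_j} (-1)^{t-j} binom(ω(I_{λ_j}), ω(I_{λ_j}∖{i}))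
f_{(λ_t,…,λ_{j+1},i-1,λ_j-i,λ_{j-1},…,λ_1)}`,
where `λ` has `t` parts, `ω(I_{λ_j}) = λ_j + 1` for `j < t` and `x + λ_t` for `j = t`
(the leftmost interval contains the vertex of weight `w_0 = x`), and
`ω(I_{λ_j}∖{i}) = λ_j - i + 1`. -/
noncomputable def Dmat (x : ℤ) (t : ℕ) (nu lam : ℕ → ℕ) : ℤ :=
  ∑ j ∈ Finset.Icc 1 t, ∑ i ∈ Finset.Icc 1 (lam j),
    if ∀ m ∈ Finset.Icc 1 (t + 1), nu m = split lam j i m then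
      (-1 : ℤ) ^ (t - j) *
        (if j = t then zbinom (x + (lam t : ℤ)) ((lam t : ℤ) - i + 1)
          else zbinom ((lam j : ℤ) + 1) ((lam j : ℤ) - i + 1))
    else 0

/-- The coefficient of `f_μ` in `α(f_λ)`, for weak compositions `λ, μ` with `t` parts:
`(-1)^{d-μ_t} ∏_{s=0}^{t-2} binom(∑_{j≤s}(λ_j+μ_j)+μ_{s+1}+2s, ∑_{j≤s}(λ_j+μ_j)+λ_{s+1}+2s)`. -/
noncomputable def Amat (d t : ℕ) (lam mu : ℕ → ℕ) : ℤ :=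
  (-1 : ℤ) ^ (d - mu t) * Afun lam mu t

section ChainComplexAux

set_option maxHeartbeats 2000000

/-! ### Auxiliary lemmas about `split` -/

lemma split_eval_lt (L : ℕ → ℕ) (j i m : ℕ) (h : m < j) : split L j i m = L m := by
  simp [split, h]

lemma split_eval_self (L : ℕ → ℕ) (j i : ℕ) : split L j i j = L j - i := by simp [split]

lemma split_eval_succ (L : ℕ → ℕ) (j i : ℕ) : split L j i (j+1) = i - 1 := by
  unfold split; rw [if_neg (by omega), if_neg (by omega), if_pos rfl]

lemma split_eval_gt (L : ℕ → ℕ) (j i m : ℕ) (h : j + 1 < m) : split L j i m = L (m-1) := by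
  unfold split; rw [if_neg (by omega), if_neg (by omega), if_neg (by omega)]

lemma split_comm (lam : ℕ → ℕ) (j₁ i₁ j₂ i₂ : ℕ) (h : j₂ < j₁) :
    split (split lam j₁ i₁) j₂ i₂ = split (split lam j₂ i₂) (j₁+1) i₁ := by
  funext m
  simp only [split]
  split_ifs <;> first | rfl | omega | (congr 1 <;> omega)

lemma split_same (lam : ℕ → ℕ) (j₁ i₁ i₂ : ℕ) :
    split (split lam j₁ i₁) j₁ i₂ = split (split lam j₁ (i₁+i₂)) (j₁+1) i₁ := by
  funext m
  simp only [split]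
  split_ifs <;> first | rfl | omega

lemma split_supp (L : ℕ → ℕ) (t j i : ℕ) (hL : ∀ m, m = 0 ∨ t < m → L m = 0)
    (hj1 : 1 ≤ j) (hjt : j ≤ t) : ∀ m, m = 0 ∨ t + 1 < m → split L j i m = 0 := by
  rintro m (rfl | h)
  · rw [split_eval_lt _ _ _ _ (by omega)]; exact hL 0 (Or.inl rfl)
  · rw [split_eval_gt _ _ _ _ (by omega)]; exact hL (m-1) (Or.inr (by omega))

lemma sum_shift (f : ℕ → ℕ) (n : ℕ) :
    ∑ m ∈ Finset.Icc 1 n, f m = ∑ m ∈ Finset.range n, f (m+1) := by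
  rw [← Finset.Ico_add_one_right_eq_Icc, Finset.sum_Ico_eq_sum_range]
  simp [Nat.add_comm]

lemma split_sum (L : ℕ → ℕ) (t j i : ℕ)
    (hj1 : 1 ≤ j) (hjt : j ≤ t) (hi1 : 1 ≤ i) (hi2 : i ≤ L j) :
    ∑ m ∈ Finset.Icc 1 (t+1), split L j i m = (∑ m ∈ Finset.Icc 1 t, L m) - 1 := by
  have icc : ∀ n : ℕ, Finset.Icc 1 n = Finset.Ioc 0 n := fun n => by rw [← Finset.Icc_add_one_left_eq_Ioc, zero_add]
  have dec : ∀ (f : ℕ → ℕ) (n : ℕ), j ≤ n →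
      ∑ m ∈ Finset.Ioc 0 n, f m
        = (∑ m ∈ Finset.Ioc 0 (j-1), f m) + f j + ∑ m ∈ Finset.Ioc j n, f m := by
    intro f n hn
    rw [← Finset.sum_Ioc_consecutive _ (Nat.zero_le j) hn]
    congr 1
    have hj : j = (j-1) + 1 := by omega
    rw [hj, Finset.sum_Ioc_succ_top (by omega)]
    congr 2 <;> omega
  have reidx : ∑ m ∈ Finset.Ioc (j+1) (t+1), split L j i m = ∑ m ∈ Finset.Ioc j t, L m := by
    have hmap : (Finset.Ioc j t).map (addRightEmbedding 1) = Finset.Ioc (j+1) (t+1) := by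
      rw [Finset.map_add_right_Ioc]
    rw [← hmap, Finset.sum_map]
    refine Finset.sum_congr rfl fun m hm => ?_
    simp only [addRightEmbedding_apply]
    rw [split_eval_gt _ _ _ _ (by simp [Finset.mem_Ioc] at hm; omega)]
    congr 1
  have htop : ∑ m ∈ Finset.Ioc j (t+1), split L j i m
      = split L j i (j+1) + ∑ m ∈ Finset.Ioc (j+1) (t+1), split L j i m := by
    rw [← Finset.sum_Ioc_consecutive _ (by omega : j ≤ j+1) (by omega : j+1 ≤ t+1)]
    congr 1
    rw [Finset.sum_Ioc_succ_top (le_refl j)]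
    simp
  have hA : ∑ m ∈ Finset.Ioc 0 (j-1), split L j i m = ∑ m ∈ Finset.Ioc 0 (j-1), L m :=
    Finset.sum_congr rfl fun m hm =>
      split_eval_lt _ _ _ _ (by simp [Finset.mem_Ioc] at hm; omega)
  rw [icc, icc, dec _ _ (by omega), dec _ _ hjt, htop, hA, reidx,
    split_eval_self, split_eval_succ]
  omega

/-! ### Auxiliary lemmas about `toFun` -/

lemma toFun_pos (n : ℕ) (f : Fin n → ℕ) (m : ℕ) (h1 : 1 ≤ m) (h2 : m ≤ n) :
    toFun n f m = f ⟨m - 1, by omega⟩ := dif_pos ⟨h1, h2⟩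

lemma toFun_neg (n : ℕ) (f : Fin n → ℕ) (m : ℕ) (h : ¬(1 ≤ m ∧ m ≤ n)) :
    toFun n f m = 0 := dif_neg h

lemma toFun_fin (n : ℕ) (f : Fin n → ℕ) (a : Fin n) : toFun n f ((a : ℕ) + 1) = f a := by
  rw [toFun_pos n f _ (by omega) (by omega)]
  exact congrArg f (Fin.ext (by simp))

lemma sum_toFun (n : ℕ) (f : Fin n → ℕ) :
    ∑ m ∈ Finset.Icc 1 n, toFun n f m = ∑ a, f a := by
  rw [sum_shift, ← Fin.sum_univ_eq_sum_range (fun m => toFun n f (m+1))]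
  exact Finset.sum_congr rfl fun a _ => toFun_fin n f a

/-! ### The binomial identity -/

lemma zkey (n : ℤ) (M R : ℕ) (h : R ≤ M) :
    zbinom n M * zbinom M R = zbinom n R * zbinom (n - R) ((M : ℤ) - R) := by
  unfold zbinom
  rw [if_pos (by positivity), if_pos (by positivity), if_pos (by positivity), if_pos (by omega)]
  rw [Int.toNat_natCast, Int.toNat_natCast, show ((M:ℤ) - R).toNat = M - R by omega]
  rw [Ring.choose_natCast]
  have hc := Ring.choose_smul_choose n h
  rw [nsmul_eq_mul] at hc
  rw [mul_comm] at hc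
  rw [hc]

/-! ### The coefficient of the differential, and the sign-reversing involution -/

noncomputable def Coef (x : ℤ) (t : ℕ) (lam : ℕ → ℕ) (j i : ℕ) : ℤ :=
  (-1 : ℤ) ^ (t - j) *
    (if j = t then zbinom (x + (lam t : ℤ)) ((lam t : ℤ) - i + 1)
      else zbinom ((lam j : ℤ) + 1) ((lam j : ℤ) - i + 1))

attribute [local instance 0] Classical.propDecidable

lemma Dmat_def (x : ℤ) (t : ℕ) (nu lam : ℕ → ℕ) :
    Dmat x t nu lam = ∑ j ∈ Finset.Icc 1 t, ∑ i ∈ Finset.Icc 1 (lam j),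
      if ∀ m ∈ Finset.Icc 1 (t + 1), nu m = split lam j i m then Coef x t lam j i else 0 := by
  unfold Dmat Coef
  refine Finset.sum_congr rfl fun j _ => Finset.sum_congr rfl fun i _ => ?_
  by_cases h : ∀ m ∈ Finset.Icc 1 (t + 1), nu m = split lam j i m
  · rw [if_pos h, if_pos h]
  · rw [if_neg h, if_neg h]

noncomputable def FF (x : ℤ) (t : ℕ) (L nu : ℕ → ℕ) (q : ℕ × ℕ × ℕ × ℕ) : ℤ :=
  if q.2.1 ≤ L q.1 ∧ q.2.2.2 ≤ split L q.1 q.2.1 q.2.2.1 ∧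
      (∀ m ∈ Finset.Icc 1 (t + 1 + 1), nu m = split (split L q.1 q.2.1) q.2.2.1 q.2.2.2 m)
  then Coef x (t+1) (split L q.1 q.2.1) q.2.2.1 q.2.2.2 * Coef x t L q.1 q.2.1 else 0

noncomputable def GG (L : ℕ → ℕ) : ℕ × ℕ × ℕ × ℕ → ℕ × ℕ × ℕ × ℕ := fun q =>
  if q.2.1 ≤ L q.1 ∧ q.2.2.2 ≤ split L q.1 q.2.1 q.2.2.1 then
    if q.2.2.1 < q.1 then (q.2.2.1, q.2.2.2, q.1 + 1, q.2.1)
    else if q.2.2.1 = q.1 then (q.1, q.2.1 + q.2.2.2, q.1 + 1, q.2.1)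
    else if q.2.2.1 = q.1 + 1 then (q.1, q.2.2.2, q.1, q.2.1 - q.2.2.2)
    else (q.2.2.1 - 1, q.2.2.2, q.1, q.2.1)
  else q

lemma FF_pos (x : ℤ) (t : ℕ) (L nu : ℕ → ℕ) (j₁ i₁ j₂ i₂ : ℕ)
    (h1 : i₁ ≤ L j₁) (h2 : i₂ ≤ split L j₁ i₁ j₂) :
    FF x t L nu (j₁, i₁, j₂, i₂)
      = if (∀ m ∈ Finset.Icc 1 (t + 1 + 1), nu m = split (split L j₁ i₁) j₂ i₂ m)
        then Coef x (t+1) (split L j₁ i₁) j₂ i₂ * Coef x t L j₁ i₁ else 0 := by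
  unfold FF
  dsimp only
  by_cases h : ∀ m ∈ Finset.Icc 1 (t + 1 + 1), nu m = split (split L j₁ i₁) j₂ i₂ m
  · rw [if_pos ⟨h1, h2, h⟩, if_pos h]
  · rw [if_neg (fun hc => h hc.2.2), if_neg h]

lemma FF_neg (x : ℤ) (t : ℕ) (L nu : ℕ → ℕ) (q : ℕ × ℕ × ℕ × ℕ)
    (h : ¬(q.2.1 ≤ L q.1 ∧ q.2.2.2 ≤ split L q.1 q.2.1 q.2.2.1)) :
    FF x t L nu q = 0 := if_neg (fun hc => h ⟨hc.1, hc.2.1⟩)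

lemma GG_neg (L : ℕ → ℕ) (q : ℕ × ℕ × ℕ × ℕ)
    (h : ¬(q.2.1 ≤ L q.1 ∧ q.2.2.2 ≤ split L q.1 q.2.1 q.2.2.1)) :
    GG L q = q := if_neg h

lemma GG_r1 (L : ℕ → ℕ) (j₁ i₁ j₂ i₂ : ℕ)
    (h : i₁ ≤ L j₁ ∧ i₂ ≤ split L j₁ i₁ j₂) (hr : j₂ < j₁) :
    GG L (j₁, i₁, j₂, i₂) = (j₂, i₂, j₁ + 1, i₁) := by
  unfold GG; dsimp only; rw [if_pos h, if_pos hr]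

lemma GG_r2 (L : ℕ → ℕ) (j₁ i₁ i₂ : ℕ)
    (h : i₁ ≤ L j₁ ∧ i₂ ≤ split L j₁ i₁ j₁) :
    GG L (j₁, i₁, j₁, i₂) = (j₁, i₁ + i₂, j₁ + 1, i₁) := by
  unfold GG; dsimp only; rw [if_pos h, if_neg (lt_irrefl j₁), if_pos rfl]

lemma GG_r3 (L : ℕ → ℕ) (j₁ i₁ i₂ : ℕ)
    (h : i₁ ≤ L j₁ ∧ i₂ ≤ split L j₁ i₁ (j₁ + 1)) :
    GG L (j₁, i₁, j₁ + 1, i₂) = (j₁, i₂, j₁, i₁ - i₂) := by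
  unfold GG; dsimp only; rw [if_pos h, if_neg (by omega), if_neg (by omega), if_pos rfl]

lemma GG_r4 (L : ℕ → ℕ) (j₁ i₁ j₂ i₂ : ℕ)
    (h : i₁ ≤ L j₁ ∧ i₂ ≤ split L j₁ i₁ j₂) (hr : j₁ + 1 < j₂) :
    GG L (j₁, i₁, j₂, i₂) = (j₂ - 1, i₂, j₁, i₁) := by
  unfold GG; dsimp only; rw [if_pos h, if_neg (by omega), if_neg (by omega), if_neg (by omega)]

lemma key1 (x : ℤ) (L : ℕ → ℕ) (t j₁ i₁ j₂ i₂ : ℕ) (h1 : 1 ≤ j₁) (h2 : j₁ ≤ t)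
    (h3 : j₂ < j₁) :
    Coef x (t+1) (split L j₁ i₁) j₂ i₂ * Coef x t L j₁ i₁
      + Coef x (t+1) (split L j₂ i₂) (j₁+1) i₁ * Coef x t L j₂ i₂ = 0 := by
  unfold Coef
  rw [if_neg (show j₂ ≠ t+1 by omega), if_neg (show j₂ ≠ t by omega),
    split_eval_lt L j₁ i₁ j₂ h3,
    show t+1-(j₁+1) = t - j₁ by omega, show t+1-j₂ = (t-j₂)+1 by omega, pow_succ]
  by_cases h4 : j₁ = t
  · subst h4
    rw [if_pos (rfl : j₁ + 1 = j₁ + 1), if_pos (rfl : j₁ = j₁),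
      split_eval_gt L j₂ i₂ (j₁+1) (by omega), show j₁+1-1 = j₁ by omega]
    ring
  · rw [if_neg h4, if_neg (show j₁+1 ≠ t+1 by omega),
      split_eval_gt L j₂ i₂ (j₁+1) (by omega), show j₁+1-1 = j₁ by omega]
    ring

lemma key2 (x : ℤ) (L : ℕ → ℕ) (t j₁ i₁ i₂ : ℕ) (h1 : 1 ≤ j₁) (h2 : j₁ ≤ t)
    (h3 : 1 ≤ i₁) (h4 : 1 ≤ i₂) (h5 : i₁ ≤ L j₁) (h6 : i₂ ≤ L j₁ - i₁) :
    Coef x (t+1) (split L j₁ i₁) j₁ i₂ * Coef x t L j₁ i₁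
      + Coef x (t+1) (split L j₁ (i₁+i₂)) (j₁+1) i₁ * Coef x t L j₁ (i₁+i₂) = 0 := by
  unfold Coef
  rw [if_neg (show j₁ ≠ t+1 by omega), split_eval_self L j₁ i₁,
    show t+1-j₁ = (t-j₁)+1 by omega, show t+1-(j₁+1) = t-j₁ by omega, pow_succ]
  by_cases h7 : j₁ = t
  · subst h7
    rw [if_pos (rfl : j₁+1 = j₁+1), if_pos (rfl : j₁ = j₁), if_pos (rfl : j₁ = j₁),
      split_eval_succ L j₁ (i₁+i₂)]
    have hk := zkey (x + (L j₁ : ℤ)) (L j₁ - i₁ + 1) (L j₁ - i₁ - i₂ + 1) (by omega)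
    rw [show ((L j₁ - i₁ : ℕ) : ℤ) + 1 = ((L j₁ - i₁ + 1 : ℕ) : ℤ) by omega,
      show ((L j₁ - i₁ : ℕ) : ℤ) - (i₂ : ℤ) + 1 = ((L j₁ - i₁ - i₂ + 1 : ℕ) : ℤ) by omega,
      show ((L j₁ : ℕ) : ℤ) - (i₁ : ℤ) + 1 = ((L j₁ - i₁ + 1 : ℕ) : ℤ) by omega,
      show x + ((i₁ + i₂ - 1 : ℕ) : ℤ)
        = (x + ((L j₁ : ℕ) : ℤ)) - ((L j₁ - i₁ - i₂ + 1 : ℕ) : ℤ) by omega,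
      show ((i₁ + i₂ - 1 : ℕ) : ℤ) - (i₁ : ℤ) + 1
        = ((L j₁ - i₁ + 1 : ℕ) : ℤ) - ((L j₁ - i₁ - i₂ + 1 : ℕ) : ℤ) by omega,
      show ((L j₁ : ℕ) : ℤ) - ((i₁ + i₂ : ℕ) : ℤ) + 1 = ((L j₁ - i₁ - i₂ + 1 : ℕ) : ℤ) by omega]
    linear_combination (-1 * (-1:ℤ)^(j₁-j₁) * (-1:ℤ)^(j₁-j₁)) * hk
  · rw [if_neg (show j₁+1 ≠ t+1 by omega), if_neg h7, if_neg h7,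
      split_eval_succ L j₁ (i₁+i₂)]
    have hk := zkey ((L j₁ : ℤ) + 1) (L j₁ - i₁ + 1) (L j₁ - i₁ - i₂ + 1) (by omega)
    rw [show ((L j₁ - i₁ : ℕ) : ℤ) + 1 = ((L j₁ - i₁ + 1 : ℕ) : ℤ) by omega,
      show ((L j₁ - i₁ : ℕ) : ℤ) - (i₂ : ℤ) + 1 = ((L j₁ - i₁ - i₂ + 1 : ℕ) : ℤ) by omega,
      show ((L j₁ : ℕ) : ℤ) - (i₁ : ℤ) + 1 = ((L j₁ - i₁ + 1 : ℕ) : ℤ) by omega,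
      show ((i₁ + i₂ - 1 : ℕ) : ℤ) + 1
        = (((L j₁ : ℕ) : ℤ) + 1) - ((L j₁ - i₁ - i₂ + 1 : ℕ) : ℤ) by omega,
      show ((i₁ + i₂ - 1 : ℕ) : ℤ) - (i₁ : ℤ) + 1
        = ((L j₁ - i₁ + 1 : ℕ) : ℤ) - ((L j₁ - i₁ - i₂ + 1 : ℕ) : ℤ) by omega,
      show ((L j₁ : ℕ) : ℤ) - ((i₁ + i₂ : ℕ) : ℤ) + 1 = ((L j₁ - i₁ - i₂ + 1 : ℕ) : ℤ) by omega]
    linear_combination (-1 * (-1:ℤ)^(t-j₁) * (-1:ℤ)^(t-j₁)) * hk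

end ChainComplexAux
section ChainComplexAux2

set_option maxHeartbeats 4000000

attribute [local instance 0] Classical.propDecidable

lemma box_mem (t k a b c d : ℕ) (h1 : 1 ≤ a) (h2 : a ≤ t) (h3 : 1 ≤ b) (h4 : b ≤ k)
    (h5 : 1 ≤ c) (h6 : c ≤ t+1) (h7 : 1 ≤ d) (h8 : d ≤ k) :
    ((a, b, c, d) : ℕ × ℕ × ℕ × ℕ)
      ∈ (Finset.Icc 1 t ×ˢ Finset.Icc 1 k ×ˢ Finset.Icc 1 (t+1) ×ˢ Finset.Icc 1 k) :=
  Finset.mem_product.mpr ⟨Finset.mem_Icc.mpr ⟨h1, h2⟩,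
    Finset.mem_product.mpr ⟨Finset.mem_Icc.mpr ⟨h3, h4⟩,
      Finset.mem_product.mpr ⟨Finset.mem_Icc.mpr ⟨h5, h6⟩, Finset.mem_Icc.mpr ⟨h7, h8⟩⟩⟩⟩

lemma master (x : ℤ) (t k : ℕ) (L nu : ℕ → ℕ) (hLk : ∀ m, L m ≤ k) :
    ∀ q ∈ (Finset.Icc 1 t ×ˢ Finset.Icc 1 k ×ˢ Finset.Icc 1 (t+1) ×ˢ Finset.Icc 1 k),
      (FF x t L nu q + FF x t L nu (GG L q) = 0) ∧
      (GG L q ∈ (Finset.Icc 1 t ×ˢ Finset.Icc 1 k ×ˢ Finset.Icc 1 (t+1) ×ˢ Finset.Icc 1 k)) ∧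
      (GG L (GG L q) = q) ∧
      (FF x t L nu q ≠ 0 → GG L q ≠ q) := by
  rintro ⟨j₁, i₁, j₂, i₂⟩ hq
  have hb : (1 ≤ j₁ ∧ j₁ ≤ t) ∧ (1 ≤ i₁ ∧ i₁ ≤ k) ∧ (1 ≤ j₂ ∧ j₂ ≤ t+1) ∧ (1 ≤ i₂ ∧ i₂ ≤ k) := by
    simpa [Finset.mem_product, Finset.mem_Icc] using hq
  obtain ⟨⟨hj11, hj1t⟩, ⟨hi11, hi1k⟩, ⟨hj21, hj2t⟩, ⟨hi21, hi2k⟩⟩ := hb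
  by_cases hg : i₁ ≤ L j₁ ∧ i₂ ≤ split L j₁ i₁ j₂
  case neg =>
    have e : GG L (j₁, i₁, j₂, i₂) = (j₁, i₁, j₂, i₂) := GG_neg L _ hg
    have f0 : FF x t L nu (j₁, i₁, j₂, i₂) = 0 := FF_neg x t L nu _ hg
    refine ⟨by rw [e, f0]; ring, by rw [e]; exact hq, by rw [e, e], fun h => absurd f0 h⟩
  case pos =>
    obtain ⟨hg1, hg2⟩ := hg
    have hLj₁ := hLk j₁
    rcases lt_trichotomy j₂ j₁ with hr | hr | hr
    · -- region 1 : j₂ < j₁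
      have e1 : GG L (j₁, i₁, j₂, i₂) = (j₂, i₂, j₁+1, i₁) := GG_r1 L j₁ i₁ j₂ i₂ ⟨hg1, hg2⟩ hr
      have hs1 : split L j₁ i₁ j₂ = L j₂ := split_eval_lt L j₁ i₁ j₂ hr
      have hs2 : split L j₂ i₂ (j₁+1) = L j₁ := by
        have h0 := split_eval_gt L j₂ i₂ (j₁+1) (by omega)
        rwa [show j₁+1-1 = j₁ by omega] at h0
      have hg1' : i₂ ≤ L j₂ := by rwa [hs1] at hg2
      have hg2' : i₁ ≤ split L j₂ i₂ (j₁+1) := by rw [hs2]; exact hg1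
      have e2 : GG L (j₂, i₂, j₁+1, i₁) = (j₁, i₁, j₂, i₂) := by
        rw [GG_r4 L j₂ i₂ (j₁+1) i₁ ⟨hg1', hg2'⟩ (by omega), Nat.add_sub_cancel]
      refine ⟨?_, ?_, ?_, ?_⟩
      · rw [e1, FF_pos x t L nu j₁ i₁ j₂ i₂ hg1 hg2, FF_pos x t L nu j₂ i₂ (j₁+1) i₁ hg1' hg2']
        by_cases hnu : ∀ m ∈ Finset.Icc 1 (t+1+1), nu m = split (split L j₁ i₁) j₂ i₂ m
        · rw [if_pos hnu,
            if_pos (show ∀ m ∈ Finset.Icc 1 (t+1+1), nu m = split (split L j₂ i₂) (j₁+1) i₁ m by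
              rw [← split_comm L j₁ i₁ j₂ i₂ hr]; exact hnu)]
          exact key1 x L t j₁ i₁ j₂ i₂ hj11 hj1t hr
        · rw [if_neg hnu, if_neg (fun hc => hnu (by rwa [split_comm L j₁ i₁ j₂ i₂ hr]))]
          ring
      · rw [e1]; exact box_mem t k _ _ _ _ (by omega) (by omega) (by omega) (by omega) (by omega) (by omega) (by omega) (by omega)
      · rw [e1, e2]
      · intro _
        rw [e1]
        intro hEq
        have h3 := congrArg (fun r : ℕ × ℕ × ℕ × ℕ => r.2.2.1) hEq
        simp only at h3
        omega
    · -- region 2 : j₂ = j₁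
      obtain rfl : j₁ = j₂ := hr.symm
      have hs : split L j₁ i₁ j₁ = L j₁ - i₁ := split_eval_self L j₁ i₁
      have hg2' : i₂ ≤ L j₁ - i₁ := by rwa [hs] at hg2
      have e1 : GG L (j₁, i₁, j₁, i₂) = (j₁, i₁+i₂, j₁+1, i₁) := GG_r2 L j₁ i₁ i₂ ⟨hg1, hg2⟩
      have hga : i₁ + i₂ ≤ L j₁ := by omega
      have hgb : i₁ ≤ split L j₁ (i₁+i₂) (j₁+1) := by
        rw [split_eval_succ]; omega
      have e2 : GG L (j₁, i₁+i₂, j₁+1, i₁) = (j₁, i₁, j₁, i₂) := by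
        rw [GG_r3 L j₁ (i₁+i₂) i₁ ⟨hga, hgb⟩, Nat.add_sub_cancel_left]
      refine ⟨?_, ?_, ?_, ?_⟩
      · rw [e1, FF_pos x t L nu j₁ i₁ j₁ i₂ hg1 hg2, FF_pos x t L nu j₁ (i₁+i₂) (j₁+1) i₁ hga hgb]
        by_cases hnu : ∀ m ∈ Finset.Icc 1 (t+1+1), nu m = split (split L j₁ i₁) j₁ i₂ m
        · rw [if_pos hnu,
            if_pos (show ∀ m ∈ Finset.Icc 1 (t+1+1),
                nu m = split (split L j₁ (i₁+i₂)) (j₁+1) i₁ m by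
              rw [← split_same L j₁ i₁ i₂]; exact hnu)]
          exact key2 x L t j₁ i₁ i₂ hj11 hj1t hi11 hi21 hg1 hg2'
        · rw [if_neg hnu, if_neg (fun hc => hnu (by rwa [split_same L j₁ i₁ i₂]))]
          ring
      · rw [e1]; exact box_mem t k _ _ _ _ (by omega) (by omega) (by omega) (by omega) (by omega) (by omega) (by omega) (by omega)
      · rw [e1, e2]
      · intro _
        rw [e1]
        intro hEq
        have h3 := congrArg (fun r : ℕ × ℕ × ℕ × ℕ => r.2.2.1) hEq
        simp only at h3
        omega
    · rcases eq_or_lt_of_le (show j₁ + 1 ≤ j₂ by omega) with hr3 | hr4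
      · -- region 3 : j₂ = j₁ + 1
        obtain rfl : j₂ = j₁ + 1 := hr3.symm
        have hs : split L j₁ i₁ (j₁+1) = i₁ - 1 := split_eval_succ L j₁ i₁
        have hg2' : i₂ ≤ i₁ - 1 := by rwa [hs] at hg2
        have e1 : GG L (j₁, i₁, j₁+1, i₂) = (j₁, i₂, j₁, i₁-i₂) := GG_r3 L j₁ i₁ i₂ ⟨hg1, hg2⟩
        have hga : i₂ ≤ L j₁ := by omega
        have hgb : i₁ - i₂ ≤ split L j₁ i₂ j₁ := by
          rw [split_eval_self]; omega
        have e2 : GG L (j₁, i₂, j₁, i₁-i₂) = (j₁, i₁, j₁+1, i₂) := by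
          rw [GG_r2 L j₁ i₂ (i₁-i₂) ⟨hga, hgb⟩, show i₂ + (i₁ - i₂) = i₁ by omega]
        have hi : i₂ + (i₁ - i₂) = i₁ := by omega
        have hfun : split (split L j₁ i₂) j₁ (i₁-i₂) = split (split L j₁ i₁) (j₁+1) i₂ := by
          rw [split_same L j₁ i₂ (i₁-i₂), hi]
        refine ⟨?_, ?_, ?_, ?_⟩
        · rw [e1, FF_pos x t L nu j₁ i₁ (j₁+1) i₂ hg1 hg2, FF_pos x t L nu j₁ i₂ j₁ (i₁-i₂) hga hgb]
          have hkey := key2 x L t j₁ i₂ (i₁-i₂) hj11 hj1t hi21 (by omega) hga (by omega)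
          rw [hi] at hkey
          by_cases hnu : ∀ m ∈ Finset.Icc 1 (t+1+1), nu m = split (split L j₁ i₁) (j₁+1) i₂ m
          · rw [if_pos hnu,
              if_pos (show ∀ m ∈ Finset.Icc 1 (t+1+1),
                  nu m = split (split L j₁ i₂) j₁ (i₁-i₂) m by
                rw [hfun]; exact hnu)]
            linear_combination hkey
          · rw [if_neg hnu, if_neg (fun hc => hnu (by rwa [hfun] at hc))]
            ring
        · rw [e1]; exact box_mem t k _ _ _ _ (by omega) (by omega) (by omega) (by omega) (by omega) (by omega) (by omega) (by omega)
        · rw [e1, e2]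
        · intro _
          rw [e1]
          intro hEq
          have h3 := congrArg (fun r : ℕ × ℕ × ℕ × ℕ => r.2.2.1) hEq
          simp only at h3
          omega
      · -- region 4 : j₁ + 1 < j₂
        have hs : split L j₁ i₁ j₂ = L (j₂-1) := split_eval_gt L j₁ i₁ j₂ hr4
        have e1 : GG L (j₁, i₁, j₂, i₂) = (j₂-1, i₂, j₁, i₁) := GG_r4 L j₁ i₁ j₂ i₂ ⟨hg1, hg2⟩ hr4
        have hga : i₂ ≤ L (j₂-1) := by rwa [hs] at hg2
        have hgb : i₁ ≤ split L (j₂-1) i₂ j₁ := by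
          rw [split_eval_lt L (j₂-1) i₂ j₁ (by omega)]; exact hg1
        have e2 : GG L (j₂-1, i₂, j₁, i₁) = (j₁, i₁, j₂, i₂) := by
          rw [GG_r1 L (j₂-1) i₂ j₁ i₁ ⟨hga, hgb⟩ (by omega), show (j₂-1) + 1 = j₂ by omega]
        have hfun : split (split L (j₂-1) i₂) j₁ i₁ = split (split L j₁ i₁) j₂ i₂ := by
          rw [split_comm L (j₂-1) i₂ j₁ i₁ (by omega), show (j₂-1)+1 = j₂ by omega]
        refine ⟨?_, ?_, ?_, ?_⟩
        · rw [e1, FF_pos x t L nu j₁ i₁ j₂ i₂ hg1 hg2, FF_pos x t L nu (j₂-1) i₂ j₁ i₁ hga hgb]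
          have hkey := key1 x L t (j₂-1) i₂ j₁ i₁ (by omega) (by omega) (by omega)
          rw [show (j₂-1)+1 = j₂ by omega] at hkey
          by_cases hnu : ∀ m ∈ Finset.Icc 1 (t+1+1), nu m = split (split L j₁ i₁) j₂ i₂ m
          · rw [if_pos hnu,
              if_pos (show ∀ m ∈ Finset.Icc 1 (t+1+1),
                  nu m = split (split L (j₂-1) i₂) j₁ i₁ m by
                rw [hfun]; exact hnu)]
            linear_combination hkey
          · rw [if_neg hnu, if_neg (fun hc => hnu (by rwa [hfun] at hc))]
            ring
        · rw [e1]; exact box_mem t k _ _ _ _ (by omega) (by omega) (by omega) (by omega) (by omega) (by omega) (by omega) (by omega)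
        · rw [e1, e2]
        · intro _
          rw [e1]
          intro hEq
          have h3 := congrArg (fun r : ℕ × ℕ × ℕ × ℕ => r.2.2.1) hEq
          simp only at h3
          omega

lemma invol (x : ℤ) (t k : ℕ) (L nu : ℕ → ℕ) (hLk : ∀ m, L m ≤ k) :
    ∑ q ∈ (Finset.Icc 1 t ×ˢ Finset.Icc 1 k ×ˢ Finset.Icc 1 (t+1) ×ˢ Finset.Icc 1 k),
      FF x t L nu q = 0 := by
  refine Finset.sum_involution (fun q _ => GG L q)
    (fun q hq => (master x t k L nu hLk q hq).1)
    (fun q hq h => (master x t k L nu hLk q hq).2.2.2 h)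
    (fun q hq => (master x t k L nu hLk q hq).2.1)
    (fun q hq => (master x t k L nu hLk q hq).2.2.1)

end ChainComplexAux2
section ChainComplexAux3

set_option maxHeartbeats 4000000

attribute [local instance 0] Classical.propDecidable

lemma collapse (x : ℤ) (t k : ℕ) (L nu : ℕ → ℕ) (hL : ∀ m, m = 0 ∨ t < m → L m = 0)
    (hsum : ∑ m ∈ Finset.Icc 1 t, L m = k) :
    ∑ mu ∈ Finset.Nat.antidiagonalTuple (t+1) (k-1),
        Dmat x (t+1) nu (toFun (t+1) mu) * Dmat x t (toFun (t+1) mu) L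
      = ∑ j ∈ Finset.Icc 1 t, ∑ i ∈ Finset.Icc 1 (L j),
          Dmat x (t+1) nu (split L j i) * Coef x t L j i := by
  have step : ∀ j ∈ Finset.Icc 1 t, ∀ i ∈ Finset.Icc 1 (L j),
      (∑ mu ∈ Finset.Nat.antidiagonalTuple (t+1) (k-1),
        if (∀ m ∈ Finset.Icc 1 (t+1), toFun (t+1) mu m = split L j i m) then
          Dmat x (t+1) nu (toFun (t+1) mu) * Coef x t L j i else 0)
      = Dmat x (t+1) nu (split L j i) * Coef x t L j i := by
    intro j hj i hi
    simp only [Finset.mem_Icc] at hj hi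
    set mu₀ : Fin (t+1) → ℕ := fun a => split L j i (a+1) with hmu₀
    have hiff : ∀ mu : Fin (t+1) → ℕ,
        (∀ m ∈ Finset.Icc 1 (t+1), toFun (t+1) mu m = split L j i m) ↔ mu = mu₀ := by
      intro mu
      constructor
      · intro h
        funext a
        have ha := h ((a : ℕ)+1) (by simp [Finset.mem_Icc]; omega)
        show mu a = split L j i ((a : ℕ)+1)
        rw [← ha, toFun_fin]
      · rintro rfl m hm
        simp only [Finset.mem_Icc] at hm
        rw [toFun_pos (t+1) mu₀ m hm.1 hm.2]
        show split L j i ((m-1)+1) = split L j i m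
        congr 1
        omega
    have hmem : mu₀ ∈ Finset.Nat.antidiagonalTuple (t+1) (k-1) := by
      rw [Finset.Nat.mem_antidiagonalTuple]
      rw [Fin.sum_univ_eq_sum_range (fun m => split L j i (m+1)), ← sum_shift,
        split_sum L t j i hj.1 hj.2 hi.1 hi.2, hsum]
    have htf : toFun (t+1) mu₀ = split L j i := by
      funext m
      by_cases h : 1 ≤ m ∧ m ≤ t+1
      · rw [toFun_pos (t+1) mu₀ m h.1 h.2]
        show split L j i ((m-1)+1) = split L j i m
        congr 1
        omega
      · rw [toFun_neg (t+1) mu₀ m h]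
        exact (split_supp L t j i hL hj.1 hj.2 m (by omega)).symm
    calc (∑ mu ∈ Finset.Nat.antidiagonalTuple (t+1) (k-1),
        if (∀ m ∈ Finset.Icc 1 (t+1), toFun (t+1) mu m = split L j i m) then
          Dmat x (t+1) nu (toFun (t+1) mu) * Coef x t L j i else 0)
        = ∑ mu ∈ Finset.Nat.antidiagonalTuple (t+1) (k-1),
          if mu = mu₀ then Dmat x (t+1) nu (toFun (t+1) mu) * Coef x t L j i else 0 := by
          refine Finset.sum_congr rfl fun mu _ => ?_
          by_cases h : mu = mu₀
          · rw [if_pos ((hiff mu).mpr h), if_pos h]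
          · rw [if_neg (fun hc => h ((hiff mu).mp hc)), if_neg h]
      _ = Dmat x (t+1) nu (toFun (t+1) mu₀) * Coef x t L j i := by
          rw [Finset.sum_ite_eq' _ mu₀
            (fun mu => Dmat x (t+1) nu (toFun (t+1) mu) * Coef x t L j i), if_pos hmem]
      _ = Dmat x (t+1) nu (split L j i) * Coef x t L j i := by rw [htf]
  calc ∑ mu ∈ Finset.Nat.antidiagonalTuple (t+1) (k-1),
        Dmat x (t+1) nu (toFun (t+1) mu) * Dmat x t (toFun (t+1) mu) L
      = ∑ mu ∈ Finset.Nat.antidiagonalTuple (t+1) (k-1), ∑ j ∈ Finset.Icc 1 t,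
          ∑ i ∈ Finset.Icc 1 (L j),
          (if (∀ m ∈ Finset.Icc 1 (t+1), toFun (t+1) mu m = split L j i m) then
            Dmat x (t+1) nu (toFun (t+1) mu) * Coef x t L j i else 0) := by
        refine Finset.sum_congr rfl fun mu _ => ?_
        rw [Dmat_def x t (toFun (t+1) mu) L, Finset.mul_sum]
        refine Finset.sum_congr rfl fun j _ => ?_
        rw [Finset.mul_sum]
        refine Finset.sum_congr rfl fun i _ => ?_
        rw [mul_ite, mul_zero]
    _ = ∑ j ∈ Finset.Icc 1 t, ∑ i ∈ Finset.Icc 1 (L j),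
          ∑ mu ∈ Finset.Nat.antidiagonalTuple (t+1) (k-1),
          (if (∀ m ∈ Finset.Icc 1 (t+1), toFun (t+1) mu m = split L j i m) then
            Dmat x (t+1) nu (toFun (t+1) mu) * Coef x t L j i else 0) := by
        rw [Finset.sum_comm]
        exact Finset.sum_congr rfl fun j _ => Finset.sum_comm
    _ = ∑ j ∈ Finset.Icc 1 t, ∑ i ∈ Finset.Icc 1 (L j),
          Dmat x (t+1) nu (split L j i) * Coef x t L j i :=
        Finset.sum_congr rfl fun j hj => Finset.sum_congr rfl fun i hi => step j hj i hi

lemma boxify (x : ℤ) (t k : ℕ) (L nu : ℕ → ℕ) (hLk : ∀ m, L m ≤ k) :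
    ∑ j ∈ Finset.Icc 1 t, ∑ i ∈ Finset.Icc 1 (L j),
        Dmat x (t+1) nu (split L j i) * Coef x t L j i
      = ∑ q ∈ (Finset.Icc 1 t ×ˢ Finset.Icc 1 k ×ˢ Finset.Icc 1 (t+1) ×ˢ Finset.Icc 1 k),
          FF x t L nu q := by
  rw [Finset.sum_product]
  refine Finset.sum_congr rfl fun j₁ hj₁ => ?_
  rw [Finset.sum_product]
  rw [Finset.mem_Icc] at hj₁
  rw [← Finset.sum_subset (Finset.Icc_subset_Icc_right (hLk j₁)) (fun i₁ h1 h2 =>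
    Finset.sum_eq_zero fun z _ => FF_neg x t L nu (j₁, i₁, z)
      (fun hc => h2 (Finset.mem_Icc.mpr ⟨(Finset.mem_Icc.mp h1).1, hc.1⟩)))]
  refine Finset.sum_congr rfl fun i₁ hi₁ => ?_
  rw [Finset.mem_Icc] at hi₁
  rw [Finset.sum_product]
  rw [Dmat_def x (t+1) nu (split L j₁ i₁), Finset.sum_mul]
  refine Finset.sum_congr rfl fun j₂ hj₂ => ?_
  rw [Finset.sum_mul]
  have hsp : split L j₁ i₁ j₂ ≤ k := by
    have h1 := hLk j₂
    have h2 := hLk j₁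
    have h3 := hLk (j₂ - 1)
    have h4 := hi₁.2
    unfold split
    split_ifs <;> omega
  rw [← Finset.sum_subset (Finset.Icc_subset_Icc_right hsp) (fun i₂ h1 h2 =>
    FF_neg x t L nu (j₁, i₁, j₂, i₂)
      (fun hc => h2 (Finset.mem_Icc.mpr ⟨(Finset.mem_Icc.mp h1).1, hc.2⟩)))]
  refine Finset.sum_congr rfl fun i₂ hi₂ => ?_
  rw [Finset.mem_Icc] at hi₂
  rw [FF_pos x t L nu j₁ i₁ j₂ i₂ hi₁.2 hi₂.2]
  by_cases hν : ∀ m ∈ Finset.Icc 1 (t + 1 + 1), nu m = split (split L j₁ i₁) j₂ i₂ m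
  · rw [if_pos hν, if_pos hν]
  · rw [if_neg hν, if_neg hν, zero_mul]

lemma main_aux (x : ℤ) (t k : ℕ) (L nu : ℕ → ℕ) (hL : ∀ m, m = 0 ∨ t < m → L m = 0)
    (hsum : ∑ m ∈ Finset.Icc 1 t, L m = k) :
    ∑ mu ∈ Finset.Nat.antidiagonalTuple (t+1) (k-1),
      Dmat x (t+1) nu (toFun (t+1) mu) * Dmat x t (toFun (t+1) mu) L = 0 := by
  have hLk : ∀ m, L m ≤ k := by
    intro m
    by_cases hm : 1 ≤ m ∧ m ≤ t
    · calc L m ≤ ∑ m ∈ Finset.Icc 1 t, L m :=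
          Finset.single_le_sum (fun _ _ => Nat.zero_le _) (Finset.mem_Icc.mpr hm)
        _ = k := hsum
    · rw [hL m (by omega)]
      exact Nat.zero_le k
  rw [collapse x t k L nu hL hsum, boxify x t k L nu hLk]
  exact invol x t k L nu hLk

end ChainComplexAux3

/-- `C_•(x, 1^d)` is a chain complex: `∂_{k-1} ∘ ∂_k = 0`. Stated on basis elements and
coefficients: for every weak composition `λ` of `k` with `d-k+1` parts and every weak
composition `ν` of `k-2` with `d-k+3` parts, the coefficient of `f_ν` in
`∂_{k-1}(∂_k(f_λ))` vanishes, for every integer value of `x`. -/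
theorem stmt13 (x : ℤ) (d k : ℕ) (hk : 2 ≤ k) (hkd : k ≤ d)
    (lam : Fin (d - k + 1) → ℕ) (hlam : ∑ i, lam i = k)
    (nu : Fin (d - k + 3) → ℕ) (hnu : ∑ i, nu i = k - 2) :
    ∑ mu ∈ Finset.Nat.antidiagonalTuple (d - k + 2) (k - 1),
        Dmat x (d - k + 2) (toFun (d - k + 3) nu) (toFun (d - k + 2) mu) *
          Dmat x (d - k + 1) (toFun (d - k + 2) mu) (toFun (d - k + 1) lam) = 0 := by
  exact main_aux x (d - k + 1) k (toFun (d - k + 1) lam) (toFun (d - k + 3) nu)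
    (fun m hm => toFun_neg _ _ _ (by omega))
    (by rw [sum_toFun]; exact hlam)
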